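/- Let h(x) = E[f(x+G)] where f: ℝⁿ → [0,1] is measurable and G ~ N(0, σ²I). Then the function x ↦ Φ⁻¹(h(x)) is (1/σ)-Lipschitz with respect to the ℓ₂ norm, where Φ⁻¹ is the standard Gaussian quantile function. -/

import Mathlib

open MeasureTheory ProbabilityTheory Real Set Filter
open scoped ENNReal NNReal Topology

/-- Standard normal CDF. -/
noncomputable def Phi (x : ℝ) : ℝ := ((gaussianReal 0 1) (Set.Iic x)).toReal

/-- Standard normal quantile function (inverse CDF). -/
noncomputable def PhiInv : ℝ → ℝ := Function.invFun Phi

/-- Gaussian measure `N(0, σ² I)` on `Fin n → ℝ`. -/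
noncomputable def gaussPi (n : ℕ) (σ : ℝ) : Measure (Fin n → ℝ) :=
  Measure.pi (fun _ => gaussianReal 0 ⟨σ ^ 2, sq_nonneg σ⟩)

/-- Euclidean (ℓ²) norm on `Fin n → ℝ`. -/
noncomputable def l2norm {n : ℕ} (v : Fin n → ℝ) : ℝ := Real.sqrt (∑ i, (v i) ^ 2)

/-- Upper `p`-quantile of a (law) measure on ℝ: `inf {y | P(X ≤ y) ≥ p}`. -/
noncomputable def upperQ (ν : Measure ℝ) (p : ℝ) : ℝ :=
  sInf {y : ℝ | p ≤ (ν (Set.Iic y)).toReal}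

/-- Lower `p`-quantile of a (law) measure on ℝ: `sup {y | P(X ≤ y) ≤ p}`. -/
noncomputable def lowerQ (ν : Measure ℝ) (p : ℝ) : ℝ :=
  sSup {y : ℝ | (ν (Set.Iic y)).toReal ≤ p}

/-- Law of `g (x + G)` with `G ~ N(0, σ² I)`. -/
noncomputable def smoothedLaw {n : ℕ} (σ : ℝ) (g : (Fin n → ℝ) → ℝ) (x : Fin n → ℝ) :
    Measure ℝ :=
  (gaussPi n σ).map (fun u => g (x + u))


-- Auxiliary lemmas

lemma Phi_nonneg (x : ℝ) : 0 ≤ Phi x := ENNReal.toReal_nonneg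

lemma gauss_split {a b : ℝ} (hab : a ≤ b) :
    (gaussianReal 0 1) (Iic b) = (gaussianReal 0 1) (Iic a) + (gaussianReal 0 1) (Ioc a b) := by
  rw [← Iic_union_Ioc_eq_Iic hab]
  exact measure_union (by rw [Set.disjoint_left]; intro x hx hx2; exact absurd hx2.1 (not_lt.mpr hx))
    measurableSet_Ioc

lemma gauss_Ioc_pos {a b : ℝ} (hab : a < b) : 0 < gaussianReal 0 1 (Ioc a b) := by
  rw [gaussianReal_apply 0 one_ne_zero, pos_iff_ne_zero]
  intro h0
  rw [setLIntegral_eq_zero_iff measurableSet_Ioc (measurable_gaussianPDF 0 1)] at h0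
  have h1 : ∀ᵐ x ∂(volume : Measure ℝ), x ∉ Ioc a b := by
    filter_upwards [h0] with x hx
    intro hmem
    exact absurd (hx hmem) (ne_of_gt (gaussianPDF_pos 0 one_ne_zero x))
  have h2 : (volume : Measure ℝ) (Ioc a b) = 0 :=
    measure_mono_null (fun x hx => by simpa using hx) (ae_iff.mp h1)
  rw [Real.volume_Ioc, ENNReal.ofReal_eq_zero] at h2
  linarith

lemma Phi_strictMono : StrictMono Phi := by
  intro a b hab
  unfold Phi
  rw [gauss_split hab.le, ENNReal.toReal_add (measure_ne_top _ _) (measure_ne_top _ _)]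
  have := ENNReal.toReal_pos (ne_of_gt (gauss_Ioc_pos hab)) (measure_ne_top _ _)
  linarith

lemma Phi_sub_le {a b : ℝ} (hab : a ≤ b) : Phi b - Phi a ≤ (Real.sqrt (2 * π))⁻¹ * (b - a) := by
  unfold Phi
  rw [gauss_split hab, ENNReal.toReal_add (measure_ne_top _ _) (measure_ne_top _ _)]
  have hb : (gaussianReal 0 1) (Ioc a b) ≤ ENNReal.ofReal ((Real.sqrt (2 * π))⁻¹ * (b - a)) := by
    rw [gaussianReal_apply 0 one_ne_zero]
    calc ∫⁻ x in Ioc a b, gaussianPDF 0 1 x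
        ≤ ∫⁻ _ in Ioc a b, ENNReal.ofReal ((Real.sqrt (2 * π))⁻¹) := by
          refine setLIntegral_mono (by fun_prop) fun x _ => ?_
          unfold gaussianPDF gaussianPDFReal
          refine ENNReal.ofReal_le_ofReal ?_
          rw [NNReal.coe_one]
          have h1 : Real.exp (-(x - 0) ^ 2 / (2 * (1:ℝ))) ≤ 1 := by
            rw [Real.exp_le_one_iff]
            have : (0:ℝ) ≤ (x - 0)^2 := sq_nonneg _
            have h2 : (0:ℝ) < 2 * (1:ℝ) := by norm_num
            exact div_nonpos_of_nonpos_of_nonneg (by linarith) h2.le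
          calc (Real.sqrt (2 * π * (1:ℝ)))⁻¹ * Real.exp (-(x - 0) ^ 2 / (2 * (1:ℝ)))
              ≤ (Real.sqrt (2 * π * (1:ℝ)))⁻¹ * 1 := by
                have h3 : (0:ℝ) ≤ (Real.sqrt (2 * π * (1:ℝ)))⁻¹ := by positivity
                exact mul_le_mul_of_nonneg_left h1 h3
            _ = (Real.sqrt (2 * π))⁻¹ := by norm_num
      _ = ENNReal.ofReal ((Real.sqrt (2 * π))⁻¹ * (b - a)) := by
          rw [setLIntegral_const, Real.volume_Ioc, ← ENNReal.ofReal_mul (by positivity)]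
  have := ENNReal.toReal_le_of_le_ofReal (by have h4 := sub_nonneg.mpr hab; positivity) hb
  linarith

lemma Phi_continuous : Continuous Phi := by
  have : LipschitzWith ⟨(Real.sqrt (2 * π))⁻¹, by positivity⟩ Phi := by
    refine LipschitzWith.of_dist_le_mul fun a b => ?_
    rcases le_total a b with hab | hab
    · rw [Real.dist_eq, Real.dist_eq, abs_of_nonpos (by have := Phi_strictMono.monotone hab; linarith),
        abs_of_nonpos (by linarith)]
      have := Phi_sub_le hab
      push_cast
      change _ ≤ (Real.sqrt (2 * π))⁻¹ * _
      linarith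
    · rw [Real.dist_eq, Real.dist_eq, abs_of_nonneg (by have := Phi_strictMono.monotone hab; linarith),
        abs_of_nonneg (by linarith)]
      have := Phi_sub_le hab
      push_cast
      change _ ≤ (Real.sqrt (2 * π))⁻¹ * _
      linarith
  exact this.continuous

lemma gauss_map_neg : (gaussianReal 0 1).map (fun x => (-1 : ℝ) * x) = gaussianReal 0 1 := by
  rw [gaussianReal_map_const_mul (μ := 0) (v := 1) (-1)]
  norm_num

lemma gauss_Ici_eq_Iic_neg (s : ℝ) :
    gaussianReal 0 1 (Ici s) = gaussianReal 0 1 (Iic (-s)) := by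
  conv_lhs => rw [← gauss_map_neg]
  rw [Measure.map_apply (by fun_prop) measurableSet_Ici]
  congr 1
  ext x
  simp only [mem_preimage, mem_Ici, mem_Iic, neg_mul, one_mul]
  constructor <;> intro h <;> linarith

lemma gauss_singleton (x : ℝ) : gaussianReal 0 1 {x} = 0 :=
  gaussianReal_absolutelyContinuous 0 one_ne_zero (measure_singleton x)

lemma Phi_add_Phi_neg (x : ℝ) : Phi x + Phi (-x) = 1 := by
  have h1 : gaussianReal 0 1 (Iic (-x)) = gaussianReal 0 1 (Ioi x) := by
    rw [← gauss_Ici_eq_Iic_neg]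
    have hset : Ici x = {x} ∪ Ioi x := by
      ext y; simp only [mem_Ici, mem_union, mem_Ioi, mem_singleton_iff]
      constructor
      · intro h; rcases lt_or_eq_of_le h with h | h
        · exact Or.inr h
        · exact Or.inl h.symm
      · rintro (h | h)
        exacts [h.ge, h.le]
    rw [hset]
    refine le_antisymm ?_ (measure_mono subset_union_right)
    refine (measure_union_le _ _).trans ?_
    rw [gauss_singleton]
    simp
  have h2 : gaussianReal 0 1 (Iic x) + gaussianReal 0 1 (Ioi x) = 1 := by
    rw [← measure_union (by rw [Set.disjoint_left]; intro y hy hy2; exact absurd (mem_Ioi.mp hy2) (not_lt.mpr hy))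
      measurableSet_Ioi, Iic_union_Ioi, measure_univ]
  unfold Phi
  rw [h1, ← ENNReal.toReal_add (measure_ne_top _ _) (measure_ne_top _ _), h2, ENNReal.toReal_one]

lemma Phi_neg (x : ℝ) : Phi (-x) = 1 - Phi x := by have := Phi_add_Phi_neg x; linarith

lemma Phi_tendsto_atTop : Tendsto Phi atTop (𝓝 1) := by
  have h1 : Tendsto (fun x => gaussianReal 0 1 (Iic x)) atTop (𝓝 (gaussianReal 0 1 univ)) :=
    tendsto_measure_Iic_atTop _
  rw [measure_univ] at h1
  have h2 := (ENNReal.tendsto_toReal (a := 1) ENNReal.one_ne_top).comp h1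
  exact h2

lemma Phi_tendsto_atBot : Tendsto Phi atBot (𝓝 0) := by
  have h1 : Tendsto (fun x => Phi (-x)) atBot (𝓝 1) :=
    Phi_tendsto_atTop.comp tendsto_neg_atBot_atTop
  have h2 : Tendsto (fun x => 1 - Phi (-x)) atBot (𝓝 (1 - 1)) :=
    (tendsto_const_nhds).sub h1
  norm_num at h2
  convert h2 using 2 with x
  rw [← Phi_neg, neg_neg]

lemma Phi_pos (x : ℝ) : 0 < Phi x := by
  have h1 : 0 < gaussianReal 0 1 (Iic x) :=
    lt_of_lt_of_le (gauss_Ioc_pos (show x - 1 < x by linarith))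
      (measure_mono (fun y hy => hy.2))
  exact ENNReal.toReal_pos (ne_of_gt h1) (measure_ne_top _ _)

lemma Phi_lt_one (x : ℝ) : Phi x < 1 := by
  have := Phi_pos (-x); have := Phi_add_Phi_neg x; linarith

lemma exists_Phi_eq {p : ℝ} (hp : p ∈ Ioo (0:ℝ) 1) : ∃ t, Phi t = p := by
  obtain ⟨b, hb⟩ := (Phi_tendsto_atTop.eventually (eventually_gt_nhds hp.2)).exists
  obtain ⟨a, ha⟩ := (Phi_tendsto_atBot.eventually (eventually_lt_nhds hp.1)).exists
  have hab : a ≤ b := by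
    by_contra hc
    push_neg at hc
    have := Phi_strictMono hc
    linarith
  have := intermediate_value_Icc hab Phi_continuous.continuousOn
  obtain ⟨t, _, ht⟩ := this ⟨ha.le, hb.le⟩
  exact ⟨t, ht⟩

lemma Phi_PhiInv {p : ℝ} (hp : p ∈ Ioo (0:ℝ) 1) : Phi (PhiInv p) = p :=
  Function.invFun_eq (exists_Phi_eq hp)

lemma PhiInv_le {p c : ℝ} (hp : p ∈ Ioo (0:ℝ) 1) (h : p ≤ Phi c) : PhiInv p ≤ c :=
  Phi_strictMono.le_iff_le.mp (by rw [Phi_PhiInv hp]; exact h)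

lemma gaussianPDFReal_conv_pointwise {v₁ v₂ : ℝ≥0} (h1 : v₁ ≠ 0) (h2 : v₂ ≠ 0) (u s : ℝ) :
    gaussianPDFReal 0 v₁ s * gaussianPDFReal 0 v₂ (u - s)
      = gaussianPDFReal 0 (v₁ + v₂) u *
        gaussianPDFReal ((v₁ : ℝ) * u / ((v₁:ℝ) + (v₂:ℝ)))
          ⟨(v₁:ℝ) * (v₂:ℝ) / ((v₁:ℝ) + (v₂:ℝ)), by positivity⟩ s := by
  have ha : (0:ℝ) < v₁ := lt_of_le_of_ne v₁.coe_nonneg (by exact_mod_cast (Ne.symm h1))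
  have hb : (0:ℝ) < v₂ := lt_of_le_of_ne v₂.coe_nonneg (by exact_mod_cast (Ne.symm h2))
  unfold gaussianPDFReal
  set a := (v₁:ℝ)
  set b := (v₂:ℝ)
  have hco : ((v₁ + v₂ : ℝ≥0) : ℝ) = a + b := by push_cast; ring
  rw [hco]
  show (Real.sqrt (2 * π * a))⁻¹ * Real.exp (-(s - 0)^2 / (2 * a)) *
      ((Real.sqrt (2 * π * b))⁻¹ * Real.exp (-(u - s - 0)^2 / (2 * b)))
    = (Real.sqrt (2 * π * (a + b)))⁻¹ * Real.exp (-(u - 0)^2 / (2 * (a + b))) *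
      ((Real.sqrt (2 * π * (a * b / (a + b))))⁻¹ *
        Real.exp (-(s - a * u / (a + b))^2 / (2 * (a * b / (a + b)))))
  have hsum : (0:ℝ) < a + b := by linarith
  have hsqrt : Real.sqrt (2 * π * a) * Real.sqrt (2 * π * b)
      = Real.sqrt (2 * π * (a + b)) * Real.sqrt (2 * π * (a * b / (a + b))) := by
    rw [← Real.sqrt_mul (by positivity), ← Real.sqrt_mul (by positivity)]
    congr 1
    field_simp
  have hexp : -(s - 0)^2 / (2 * a) + (-(u - s - 0)^2 / (2 * b))
      = -(u - 0)^2 / (2 * (a + b)) + (-(s - a * u / (a + b))^2 / (2 * (a * b / (a + b)))) := by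
    field_simp
    ring
  calc (Real.sqrt (2 * π * a))⁻¹ * Real.exp (-(s - 0)^2 / (2 * a)) *
        ((Real.sqrt (2 * π * b))⁻¹ * Real.exp (-(u - s - 0)^2 / (2 * b)))
      = (Real.sqrt (2 * π * a) * Real.sqrt (2 * π * b))⁻¹ *
          Real.exp (-(s - 0)^2 / (2 * a) + (-(u - s - 0)^2 / (2 * b))) := by
        rw [mul_inv, Real.exp_add]; ring
    _ = (Real.sqrt (2 * π * (a + b)) * Real.sqrt (2 * π * (a * b / (a + b))))⁻¹ *
          Real.exp (-(u - 0)^2 / (2 * (a + b)) + (-(s - a * u / (a + b))^2 / (2 * (a * b / (a + b))))) := by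
        rw [hsqrt, hexp]
    _ = _ := by rw [mul_inv, Real.exp_add]; ring

lemma gaussianReal_conv (v₁ v₂ : ℝ≥0) :
    ((gaussianReal 0 v₁).prod (gaussianReal 0 v₂)).map (fun p : ℝ × ℝ => p.1 + p.2)
      = gaussianReal 0 (v₁ + v₂) := by
  by_cases h1 : v₁ = 0
  · subst h1
    rw [gaussianReal_zero_var, Measure.dirac_prod, Measure.map_map (by fun_prop) (by fun_prop)]
    simp only [zero_add]
    have : ((fun p : ℝ × ℝ => p.1 + p.2) ∘ Prod.mk (0:ℝ)) = id := by
      funext x; simp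
    rw [this, Measure.map_id]
  by_cases h2 : v₂ = 0
  · subst h2
    rw [gaussianReal_zero_var, Measure.prod_dirac, Measure.map_map (by fun_prop) (by fun_prop)]
    simp only [add_zero]
    have : ((fun p : ℝ × ℝ => p.1 + p.2) ∘ (fun x : ℝ => (x, (0:ℝ)))) = id := by
      funext x; simp
    rw [this, Measure.map_id]
  -- main case
  have hadd : Measurable fun p : ℝ × ℝ => p.1 + p.2 := by fun_prop
  have h12 : v₁ + v₂ ≠ 0 := fun hc => h1 (by simpa using (add_eq_zero.mp hc).1)
  have ha : (0:ℝ) < v₁ := lt_of_le_of_ne v₁.coe_nonneg (by exact_mod_cast (Ne.symm h1))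
  have hb : (0:ℝ) < v₂ := lt_of_le_of_ne v₂.coe_nonneg (by exact_mod_cast (Ne.symm h2))
  have : IsProbabilityMeasure (((gaussianReal 0 v₁).prod (gaussianReal 0 v₂)).map
      (fun p : ℝ × ℝ => p.1 + p.2)) := Measure.isProbabilityMeasure_map hadd.aemeasurable
  refine Measure.ext_of_Iic _ _ fun t => ?_
  set w : ℝ≥0 := ⟨(v₁:ℝ) * (v₂:ℝ) / ((v₁:ℝ) + (v₂:ℝ)), by positivity⟩ with hw
  have hwne : w ≠ 0 := by
    intro hc
    have : ((w:ℝ≥0):ℝ) = 0 := by rw [hc]; simp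
    rw [hw] at this
    change (v₁:ℝ) * (v₂:ℝ) / ((v₁:ℝ) + (v₂:ℝ)) = 0 at this
    have : (0:ℝ) < (v₁:ℝ) * (v₂:ℝ) / ((v₁:ℝ) + (v₂:ℝ)) := by positivity
    linarith
  -- the 2D integrand
  set G : ℝ × ℝ → ℝ≥0∞ := fun p =>
    Set.indicator {q : ℝ × ℝ | q.2 ≤ t} (fun q => gaussianPDF 0 v₁ q.1 * gaussianPDF 0 v₂ (q.2 - q.1)) p
    with hG
  have hGmeas : Measurable G := by
    refine Measurable.indicator ?_ (measurableSet_le (by fun_prop) (by fun_prop))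
    exact ((measurable_gaussianPDF 0 v₁).comp measurable_fst).mul
      ((measurable_gaussianPDF 0 v₂).comp (measurable_snd.sub measurable_fst))
  set G2 : ℝ × ℝ → ℝ≥0∞ := fun p =>
    Set.indicator {q : ℝ × ℝ | q.2 ≤ t} (fun q => gaussianPDF 0 v₂ (q.2 - q.1)) p with hG2
  have hG2meas : Measurable G2 := by
    refine Measurable.indicator ?_ (measurableSet_le (by fun_prop) (by fun_prop))
    exact (measurable_gaussianPDF 0 v₂).comp (measurable_snd.sub measurable_fst)
  have lhs_eq : (((gaussianReal 0 v₁).prod (gaussianReal 0 v₂)).map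
      (fun p : ℝ × ℝ => p.1 + p.2)) (Iic t) = ∫⁻ s, ∫⁻ u, G2 (s, u) ∂volume ∂(gaussianReal 0 v₁) := by
    rw [Measure.map_apply hadd measurableSet_Iic]
    have hpre : (fun p : ℝ × ℝ => p.1 + p.2) ⁻¹' Iic t = {p : ℝ × ℝ | p.1 + p.2 ≤ t} := rfl
    rw [hpre, Measure.prod_apply (measurableSet_le (by fun_prop) (by fun_prop))]
    congr 1
    funext s
    have hps : Prod.mk s ⁻¹' {p : ℝ × ℝ | p.1 + p.2 ≤ t} = Iic (t - s) := by
      ext u; simp only [mem_preimage, mem_setOf_eq, mem_Iic]; constructor <;> intro <;> linarith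
    rw [hps, gaussianReal_apply 0 h2, ← lintegral_indicator measurableSet_Iic]
    have hcv : ∀ u : ℝ, (Iic (t-s)).indicator (gaussianPDF 0 v₂) (u - s) = G2 (s, u) := by
      intro u
      rw [hG2]
      simp only [Set.indicator, mem_Iic, mem_setOf_eq]
      by_cases hu : u ≤ t
      · rw [if_pos (by linarith), if_pos hu]
      · rw [if_neg (by intro hc; exact hu (by linarith)), if_neg hu]
    
    calc ∫⁻ u, (Iic (t-s)).indicator (gaussianPDF 0 v₂) u ∂volume
        = ∫⁻ u, (Iic (t-s)).indicator (gaussianPDF 0 v₂) (u - s) ∂volume := by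
          exact ((measurePreserving_sub_right volume s).lintegral_comp
            ((measurable_gaussianPDF 0 v₂).indicator measurableSet_Iic)).symm
      _ = ∫⁻ u, G2 (s, u) ∂volume := by
          congr 1; funext u; exact hcv u
  rw [lhs_eq]
  rw [gaussianReal_of_var_ne_zero 0 h1,
    lintegral_withDensity_eq_lintegral_mul volume
      (measurable_gaussianPDF 0 v₁) (by exact hG2meas.lintegral_prod_right')]
  have hpull : ∀ s : ℝ, (gaussianPDF 0 v₁ * fun s => ∫⁻ u, G2 (s, u) ∂volume) s
      = ∫⁻ u, G (s, u) ∂volume := by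
    intro s
    simp only [Pi.mul_apply]
    rw [← lintegral_const_mul _ (by exact (hG2meas.comp (measurable_prodMk_left)))]
    congr 1
    funext u
    rw [hG, hG2]
    simp only [Set.indicator, mem_setOf_eq]
    by_cases hu : u ≤ t
    · rw [if_pos hu, if_pos hu]
    · rw [if_neg hu, if_neg hu, mul_zero]
  rw [lintegral_congr hpull]
  calc ∫⁻ s, ∫⁻ u, G (s, u) ∂volume ∂volume
      = ∫⁻ u, ∫⁻ s, G (s, u) ∂volume ∂volume := by
        exact lintegral_lintegral_swap (f := fun s u => G (s, u)) (by exact hGmeas.aemeasurable)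
    _ = ∫⁻ u, (Iic t).indicator (gaussianPDF 0 (v₁ + v₂)) u ∂volume := by
        congr 1
        funext u
        by_cases hu : u ≤ t
        · have hpt : ∀ s : ℝ, G (s, u) = gaussianPDF 0 (v₁ + v₂) u *
              gaussianPDF ((v₁:ℝ) * u / ((v₁:ℝ) + (v₂:ℝ))) w s := by
            intro s
            rw [hG]
            simp only [Set.indicator, mem_setOf_eq, if_pos hu]
            unfold gaussianPDF
            rw [← ENNReal.ofReal_mul (gaussianPDFReal_nonneg _ _ _),
              gaussianPDFReal_conv_pointwise h1 h2 u s,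
              ENNReal.ofReal_mul (gaussianPDFReal_nonneg _ _ _)]
          rw [show (Iic t).indicator (gaussianPDF 0 (v₁ + v₂)) u = gaussianPDF 0 (v₁ + v₂) u from
            by simp [Set.indicator, hu]]
          calc ∫⁻ s, G (s, u) ∂volume
              = ∫⁻ s, gaussianPDF 0 (v₁ + v₂) u *
                  gaussianPDF ((v₁:ℝ) * u / ((v₁:ℝ) + (v₂:ℝ))) w s ∂volume :=
                lintegral_congr hpt
            _ = gaussianPDF 0 (v₁ + v₂) u *
                  ∫⁻ s, gaussianPDF ((v₁:ℝ) * u / ((v₁:ℝ) + (v₂:ℝ))) w s ∂volume :=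
                lintegral_const_mul _ (measurable_gaussianPDF _ _)
            _ = gaussianPDF 0 (v₁ + v₂) u := by
                rw [lintegral_gaussianPDF_eq_one _ hwne, mul_one]
        · have hz : ∀ s : ℝ, G (s, u) = 0 := by
            intro s
            rw [hG]
            simp only [Set.indicator, mem_setOf_eq, if_neg hu]
          rw [lintegral_congr hz, lintegral_zero,
            show (Iic t).indicator (gaussianPDF 0 (v₁ + v₂)) u = 0 from by simp [Set.indicator, hu]]
    _ = (gaussianReal 0 (v₁ + v₂)) (Iic t) := by
        rw [lintegral_indicator measurableSet_Iic, gaussianReal_apply 0 h12]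

lemma gaussPi_map_sum (V : ℝ≥0) : ∀ (n : ℕ) (c : Fin n → ℝ),
    (Measure.pi fun _ : Fin n => gaussianReal 0 V).map (fun u => ∑ i, c i * u i)
      = gaussianReal 0 ((∑ i, (c i)^2).toNNReal * V) := by
  intro n
  induction n with
  | zero =>
    intro c
    have h0 : (fun u : Fin 0 → ℝ => ∑ i, c i * u i) = fun _ => (0:ℝ) := by
      funext u; simp
    rw [h0, Measure.map_const, measure_univ, one_smul]
    simp [gaussianReal_zero_var]
  | succ n ih =>
    intro c
    have hmp := measurePreserving_piFinSuccAbove (fun _ : Fin (n+1) => gaussianReal 0 V) 0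
    set e := MeasurableEquiv.piFinSuccAbove (fun _ : Fin (n+1) => ℝ) 0 with he
    have hsum : (fun u : Fin (n+1) → ℝ => ∑ i, c i * u i)
        = (fun p : ℝ × (Fin n → ℝ) => c 0 * p.1 + ∑ i : Fin n, c i.succ * p.2 i) ∘ e := by
      funext u
      simp [he, MeasurableEquiv.piFinSuccAbove_apply, Fin.sum_univ_succ, Fin.succAbove_zero,
        Fin.tail]
    have hmeas2 : Measurable (fun p : ℝ × (Fin n → ℝ) => c 0 * p.1 + ∑ i : Fin n, c i.succ * p.2 i) := by
      fun_prop
    rw [hsum, ← Measure.map_map hmeas2 e.measurable, hmp.map_eq]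
    have hsplit : (fun p : ℝ × (Fin n → ℝ) => c 0 * p.1 + ∑ i : Fin n, c i.succ * p.2 i)
        = (fun q : ℝ × ℝ => q.1 + q.2) ∘
          (Prod.map (fun a : ℝ => c 0 * a) (fun w : Fin n → ℝ => ∑ i : Fin n, c i.succ * w i)) := by
      funext p; rfl
    rw [hsplit, ← Measure.map_map (by fun_prop) (by fun_prop),
      ← Measure.map_prod_map _ _ (by fun_prop) (by fun_prop), ih (fun i => c i.succ),
      gaussianReal_map_const_mul (c 0), mul_zero, gaussianReal_conv]
    congr 1
    refine NNReal.coe_injective ?_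
    push_cast
    rw [Real.coe_toNNReal _ (Finset.sum_nonneg fun i _ => sq_nonneg _),
      Real.coe_toNNReal _ (Finset.sum_nonneg fun i _ => sq_nonneg _),
      Fin.sum_univ_succ]
    ring

lemma gaussianPDFReal_shift {V : ℝ≥0} (hV : V ≠ 0) (c a : ℝ) :
    gaussianPDFReal 0 V (a - c)
      = gaussianPDFReal 0 V a * Real.exp ((c * a - c^2/2) / V) := by
  have hVpos : (0:ℝ) < V := lt_of_le_of_ne V.coe_nonneg (by exact_mod_cast (Ne.symm hV))
  unfold gaussianPDFReal
  have hexp : Real.exp (-(a - c - 0)^2/(2*(V:ℝ)))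
      = Real.exp (-(a - 0)^2/(2*(V:ℝ))) * Real.exp ((c * a - c^2/2) / (V:ℝ)) := by
    rw [← Real.exp_add]
    congr 1
    field_simp
    ring
  rw [hexp]
  ring

lemma gauss_shift1 {V : ℝ≥0} (hV : V ≠ 0) (c : ℝ) (G : ℝ → ℝ≥0∞) (hG : Measurable G) :
    ∫⁻ a, G (c + a) ∂(gaussianReal 0 V)
      = ∫⁻ a, G a * ENNReal.ofReal (Real.exp ((c * a - c^2/2) / V)) ∂(gaussianReal 0 V) := by
  rw [gaussianReal_of_var_ne_zero 0 hV,
    lintegral_withDensity_eq_lintegral_mul volume (measurable_gaussianPDF 0 V)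
      (by exact hG.comp (by fun_prop)),
    lintegral_withDensity_eq_lintegral_mul volume (measurable_gaussianPDF 0 V)
      (by exact hG.mul (by fun_prop))]
  have hcv := (measurePreserving_sub_right volume c).lintegral_comp
    (f := fun a => gaussianPDF 0 V a * G (c + a))
    (by exact (measurable_gaussianPDF 0 V).mul (hG.comp (by fun_prop)))
  simp only [Pi.mul_apply]
  rw [← hcv]
  refine lintegral_congr fun a => ?_
  have harg : c + (a - c) = a := by ring
  show gaussianPDF 0 V (a - c) * G (c + (a - c)) = _
  rw [harg]
  unfold gaussianPDF
  rw [gaussianPDFReal_shift hV c a,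
    ENNReal.ofReal_mul (gaussianPDFReal_nonneg _ _ _)]
  ring

lemma gauss_shiftPi {V : ℝ≥0} (hV : V ≠ 0) : ∀ (n : ℕ) (v : Fin n → ℝ)
    (F : (Fin n → ℝ) → ℝ≥0∞), Measurable F →
    ∫⁻ u, F (v + u) ∂(Measure.pi fun _ : Fin n => gaussianReal 0 V)
      = ∫⁻ u, F u * ENNReal.ofReal (Real.exp ((∑ i, (v i * u i - (v i)^2/2)) / V))
          ∂(Measure.pi fun _ : Fin n => gaussianReal 0 V) := by
  intro n
  induction n with
  | zero =>
    intro v F hF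
    refine lintegral_congr fun u => ?_
    rw [Subsingleton.elim (v + u) u]
    simp
  | succ n ih =>
    intro v F hF
    have hmp := measurePreserving_piFinSuccAbove (fun _ : Fin (n+1) => gaussianReal 0 V) 0
    set e := MeasurableEquiv.piFinSuccAbove (fun _ : Fin (n+1) => ℝ) 0 with he
    have hcons : ∀ (b : ℝ) (w : Fin n → ℝ), v + e.symm (b, w) = e.symm (v 0 + b, Fin.tail v + w) := by
      intro b w
      funext j
      refine Fin.cases ?_ (fun k => ?_) j
      · simp [he, MeasurableEquiv.piFinSuccAbove_symm_apply, Fin.insertNth_zero]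
      · simp [he, MeasurableEquiv.piFinSuccAbove_symm_apply, Fin.insertNth_zero, Fin.tail]
    have hsum_split : ∀ (b : ℝ) (w : Fin n → ℝ),
        (∑ i : Fin (n+1), (v i * (e.symm (b, w)) i - (v i)^2/2))
          = (v 0 * b - (v 0)^2/2) + ∑ k : Fin n, (Fin.tail v k * w k - (Fin.tail v k)^2/2) := by
      intro b w
      rw [Fin.sum_univ_succ]
      simp [he, MeasurableEquiv.piFinSuccAbove_symm_apply, Fin.insertNth_zero, Fin.tail]
    set γ := gaussianReal 0 V with hγ
    set πn := (Measure.pi fun _ : Fin n => gaussianReal 0 V) with hπn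
    set E : (Fin n → ℝ) → ℝ≥0∞ := fun w =>
      ENNReal.ofReal (Real.exp ((∑ k, (Fin.tail v k * w k - (Fin.tail v k)^2/2)) / V)) with hE
    have hEmeas : Measurable E := by
      refine ENNReal.measurable_ofReal.comp (Real.measurable_exp.comp ?_)
      fun_prop
    set E0 : ℝ → ℝ≥0∞ := fun b => ENNReal.ofReal (Real.exp ((v 0 * b - (v 0)^2/2) / V)) with hE0
    have hE0meas : Measurable E0 := by
      refine ENNReal.measurable_ofReal.comp (Real.measurable_exp.comp ?_)
      fun_prop
    set Ψ : ℝ → ℝ≥0∞ := fun b => ∫⁻ w, F (e.symm (b, w)) * E w ∂πn with hΨ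
    have hcore : Measurable fun p : ℝ × (Fin n → ℝ) => F (e.symm p) * E p.2 :=
      (hF.comp e.symm.measurable).mul (hEmeas.comp measurable_snd)
    have hΨmeas : Measurable Ψ := by
      exact hcore.lintegral_prod_right'
    set W : (Fin (n+1) → ℝ) → ℝ≥0∞ := fun u =>
      F u * ENNReal.ofReal (Real.exp ((∑ i, (v i * u i - (v i)^2/2)) / V)) with hW
    have hWmeas : Measurable W := by
      refine hF.mul (ENNReal.measurable_ofReal.comp (Real.measurable_exp.comp ?_))
      fun_prop
    have hshiftmeas : Measurable fun p : ℝ × (Fin n → ℝ) =>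
        F (e.symm (v 0 + p.1, Fin.tail v + p.2)) := by
      refine hF.comp (e.symm.measurable.comp ?_)
      refine Measurable.prodMk (by fun_prop) ?_
      refine measurable_pi_iff.mpr fun k => ?_
      exact (measurable_pi_apply k).comp measurable_snd |>.const_add _
    calc ∫⁻ u, F (v + u) ∂(Measure.pi fun _ : Fin (n+1) => gaussianReal 0 V)
        = ∫⁻ p, F (v + e.symm p) ∂(γ.prod πn) :=
          ((hmp.symm e).lintegral_comp (hF.comp (by fun_prop))).symm
      _ = ∫⁻ p, F (e.symm (v 0 + p.1, Fin.tail v + p.2)) ∂(γ.prod πn) := by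
          refine lintegral_congr fun p => ?_
          rw [show (v + e.symm p) = e.symm (v 0 + p.1, Fin.tail v + p.2) from hcons p.1 p.2]
      _ = ∫⁻ a, ∫⁻ w, F (e.symm (v 0 + a, Fin.tail v + w)) ∂πn ∂γ :=
          lintegral_prod _ hshiftmeas.aemeasurable
      _ = ∫⁻ a, Ψ (v 0 + a) ∂γ := by
          refine lintegral_congr fun a => ?_
          exact ih (Fin.tail v) (fun w => F (e.symm (v 0 + a, w)))
            (hF.comp (e.symm.measurable.comp measurable_prodMk_left))
      _ = ∫⁻ a, Ψ a * E0 a ∂γ := gauss_shift1 hV (v 0) Ψ hΨmeas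
      _ = ∫⁻ a, ∫⁻ w, F (e.symm (a, w)) * E w * E0 a ∂πn ∂γ := by
          refine lintegral_congr fun a => ?_
          rw [hΨ]
          exact (lintegral_mul_const _ (hcore.comp measurable_prodMk_left)).symm
      _ = ∫⁻ a, ∫⁻ w, W (e.symm (a, w)) ∂πn ∂γ := by
          refine lintegral_congr fun a => ?_
          refine lintegral_congr fun w => ?_
          rw [hW, hE, hE0]
          simp only []
          rw [mul_assoc, ← ENNReal.ofReal_mul (Real.exp_nonneg _), ← Real.exp_add]
          congr 3
          rw [hsum_split a w, add_div, add_comm]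
      _ = ∫⁻ p, W (e.symm p) ∂(γ.prod πn) :=
          (lintegral_prod _ ((hWmeas.comp e.symm.measurable).aemeasurable)).symm
      _ = ∫⁻ u, W u ∂(Measure.pi fun _ : Fin (n+1) => gaussianReal 0 V) :=
          (hmp.symm e).lintegral_comp hWmeas

/-- If `h(x) = E[f(x+G)]` with `f : ℝⁿ → [0,1]` measurable and
`G ~ N(0, σ² I)`, then `x ↦ Φ⁻¹(h x)` is `(1/σ)`-Lipschitz for the ℓ² norm. -/
theorem stmt_1 {n : ℕ} (σ : ℝ) (hσ : 0 < σ) (f : (Fin n → ℝ) → ℝ) (hf : Measurable f)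
    (hf01 : ∀ z, f z ∈ Set.Icc (0:ℝ) 1)
    (h : (Fin n → ℝ) → ℝ) (hh : ∀ x, h x = ∫ u, f (x + u) ∂(gaussPi n σ))
    (hh01 : ∀ x, h x ∈ Set.Ioo (0:ℝ) 1) :
    ∀ x y : Fin n → ℝ, |PhiInv (h x) - PhiInv (h y)| ≤ (1 / σ) * l2norm (x - y) := by
  have key : ∀ x y : Fin n → ℝ, h x ≤ Phi (PhiInv (h y) + (1 / σ) * l2norm (x - y)) := by
    intro x y
    set v : Fin n → ℝ := x - y with hv
    set d : ℝ := l2norm v with hd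
    have hd0 : 0 ≤ d := Real.sqrt_nonneg _
    have hsumnn : 0 ≤ ∑ i, (v i)^2 := Finset.sum_nonneg fun i _ => sq_nonneg _
    by_cases hdz : d = 0
    · have hsum0 : ∑ i, (v i)^2 = 0 := by
        have h1 := Real.sqrt_eq_zero'.mp hdz
        linarith
      have hveq : v = 0 := by
        funext i
        have := (Finset.sum_eq_zero_iff_of_nonneg fun j _ => sq_nonneg (v j)).mp hsum0 i
          (Finset.mem_univ i)
        exact pow_eq_zero_iff (by norm_num) |>.mp this
      have hxy : x = y := by
        have : x - y = 0 := hveq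
        rwa [sub_eq_zero] at this
      rw [hxy, hdz, mul_zero, add_zero, Phi_PhiInv (hh01 y)]
    · -- main case
      have hdpos : 0 < d := lt_of_le_of_ne hd0 (Ne.symm hdz)
      set V : ℝ≥0 := ⟨σ^2, sq_nonneg σ⟩ with hV
      have hVcoe : (V:ℝ) = σ^2 := rfl
      have hVne : V ≠ 0 := by
        intro hc
        have h1 : (V:ℝ) = 0 := by rw [hc]; simp
        rw [hVcoe] at h1
        nlinarith
      have hμdef : gaussPi n σ = Measure.pi (fun _ : Fin n => gaussianReal 0 V) := rfl
      set μ := gaussPi n σ with hμ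
      set a : ℝ := d / σ with ha
      have ha0 : 0 ≤ a := div_nonneg hd0 hσ.le
      set c : Fin n → ℝ := fun i => v i / (σ * d) with hc
      set T : (Fin n → ℝ) → ℝ := fun u => ∑ i, c i * u i with hT
      have hTmeas : Measurable T := by fun_prop
      have hd2 : d^2 = ∑ i, (v i)^2 := Real.sq_sqrt hsumnn
      have hlaw : μ.map T = gaussianReal 0 1 := by
        show (Measure.pi fun _ : Fin n => gaussianReal 0 V).map T = _
        rw [hT, gaussPi_map_sum V n c]
        congr 1
        refine NNReal.coe_injective ?_
        push_cast
        rw [Real.coe_toNNReal _ (Finset.sum_nonneg fun i _ => sq_nonneg _)]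
        have hsc : ∑ i, (c i)^2 = (∑ i, (v i)^2) / (σ^2 * d^2) := by
          rw [Finset.sum_div]
          refine Finset.sum_congr rfl fun i _ => ?_
          rw [hc]
          rw [div_pow]
          congr 1
          ring
        rw [hsc, ← hd2, hVcoe]
        field_simp
      set t0 : ℝ := - PhiInv (h y) with ht0
      set B : Set (Fin n → ℝ) := {u | t0 ≤ T u} with hB
      have hBmeas : MeasurableSet B := measurableSet_le measurable_const hTmeas
      haveI hPμ : IsProbabilityMeasure μ := by
        rw [hμ]
        show IsProbabilityMeasure (Measure.pi fun _ : Fin n => gaussianReal 0 V)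
        infer_instance
      have hμB : μ B = ENNReal.ofReal (h y) := by
        have hBpre : B = T ⁻¹' (Ici t0) := rfl
        rw [hBpre, ← Measure.map_apply hTmeas measurableSet_Ici, hlaw,
          gauss_Ici_eq_Iic_neg, show -t0 = PhiInv (h y) by rw [ht0, neg_neg]]
        have hrw : ENNReal.ofReal (h y) = ENNReal.ofReal (Phi (PhiInv (h y))) := by
          rw [Phi_PhiInv (hh01 y)]
        rw [hrw]
        unfold Phi
        rw [ENNReal.ofReal_toReal (measure_ne_top _ _)]
      -- weight functions
      set L : (Fin n → ℝ) → ℝ := fun u => Real.exp (a * T u - a^2/2) with hL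
      set L0 : ℝ := Real.exp (a * t0 - a^2/2) with hL0
      have hLpos : ∀ u, 0 < L u := fun u => Real.exp_pos _
      have hL0pos : 0 < L0 := Real.exp_pos _
      have hfy : Measurable fun u : Fin n → ℝ => f (y + u) := hf.comp (by fun_prop)
      have hLmeas : Measurable L := by
        refine Real.measurable_exp.comp ?_
        fun_prop
      have hlz : ∀ z : Fin n → ℝ, ∫⁻ u, ENNReal.ofReal (f (z + u)) ∂μ = ENNReal.ofReal (h z) := by
        intro z
        have hmz : Measurable fun u : Fin n → ℝ => f (z + u) := hf.comp (by fun_prop)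
        have h1 : h z = (∫⁻ u, ENNReal.ofReal (f (z + u)) ∂μ).toReal := by
          rw [hh z, integral_eq_lintegral_of_nonneg_ae (ae_of_all _ fun u => (hf01 (z + u)).1)
            hmz.aestronglyMeasurable]
        have hfin : ∫⁻ u, ENNReal.ofReal (f (z + u)) ∂μ ≤ 1 := by
          have hle : ∀ u, ENNReal.ofReal (f (z + u)) ≤ 1 := fun u => by
            rw [← ENNReal.ofReal_one]
            exact ENNReal.ofReal_le_ofReal (hf01 (z + u)).2
          calc ∫⁻ u, ENNReal.ofReal (f (z + u)) ∂μ ≤ ∫⁻ _, 1 ∂μ := lintegral_mono hle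
            _ = 1 := by simp
        rw [h1, ENNReal.ofReal_toReal (ne_top_of_le_ne_top ENNReal.one_ne_top hfin)]
      have hLT : ∀ u : Fin n → ℝ, (∑ i, (v i * u i - (v i)^2/2)) / (V:ℝ) = a * T u - a^2/2 := by
        intro u
        have hTu : T u = (∑ i, v i * u i) / (σ * d) := by
          show (∑ i, c i * u i) = _
          rw [Finset.sum_div]
          exact Finset.sum_congr rfl fun i _ => div_mul_eq_mul_div _ _ _
        rw [hVcoe, hTu, ha, Finset.sum_sub_distrib, ← Finset.sum_div, ← hd2]
        field_simp
      have hshift : ENNReal.ofReal (h x)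
          = ∫⁻ u, ENNReal.ofReal (f (y + u)) * ENNReal.ofReal (L u) ∂μ := by
        rw [← hlz x]
        have hxyv : ∀ u : Fin n → ℝ, x + u = y + (v + u) := by
          intro u
          funext i
          simp only [Pi.add_apply, Pi.sub_apply, hv]
          ring
        calc ∫⁻ u, ENNReal.ofReal (f (x + u)) ∂μ
            = ∫⁻ u, (fun w => ENNReal.ofReal (f (y + w))) (v + u) ∂μ := by
              refine lintegral_congr fun u => ?_
              rw [hxyv u]
          _ = ∫⁻ u, ENNReal.ofReal (f (y + u)) *
                ENNReal.ofReal (Real.exp ((∑ i, (v i * u i - (v i)^2/2)) / V)) ∂μ :=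
              gauss_shiftPi hVne n v _ (ENNReal.measurable_ofReal.comp hfy)
          _ = _ := by
              refine lintegral_congr fun u => ?_
              rw [hLT u, hL]
      have hNP : ∀ u, ENNReal.ofReal (f (y + u)) * ENNReal.ofReal (L u)
            + B.indicator (fun _ => ENNReal.ofReal L0) u
          ≤ B.indicator (fun u' => ENNReal.ofReal (L u')) u
            + ENNReal.ofReal L0 * ENNReal.ofReal (f (y + u)) := by
        intro u
        have hg0 := (hf01 (y + u)).1
        have hg1 := (hf01 (y + u)).2
        by_cases hu : u ∈ B
        · rw [Set.indicator_of_mem hu, Set.indicator_of_mem hu]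
          have ht : t0 ≤ T u := hu
          have hLL : L0 ≤ L u := by
            rw [hL0, hL]
            exact Real.exp_le_exp.mpr (by nlinarith)
          rw [← ENNReal.ofReal_mul hg0, ← ENNReal.ofReal_mul hL0pos.le,
            ← ENNReal.ofReal_add (by positivity) hL0pos.le,
            ← ENNReal.ofReal_add (hLpos u).le (by positivity)]
          refine ENNReal.ofReal_le_ofReal ?_
          nlinarith [hLpos u]
        · rw [Set.indicator_of_notMem hu, Set.indicator_of_notMem hu]
          have ht : T u < t0 := not_le.mp hu
          have hLL : L u ≤ L0 := by
            rw [hL0, hL]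
            exact Real.exp_le_exp.mpr (by nlinarith)
          rw [add_zero, zero_add, ← ENNReal.ofReal_mul hg0, ← ENNReal.ofReal_mul hL0pos.le]
          refine ENNReal.ofReal_le_ofReal ?_
          nlinarith [hLpos u]
      have hmGL : Measurable fun u => ENNReal.ofReal (f (y + u)) * ENNReal.ofReal (L u) :=
        (ENNReal.measurable_ofReal.comp hfy).mul (ENNReal.measurable_ofReal.comp hLmeas)
      have hmIndL : Measurable (B.indicator (fun u' => ENNReal.ofReal (L u'))) :=
        (ENNReal.measurable_ofReal.comp hLmeas).indicator hBmeas
      have hIleq : ∫⁻ u, ENNReal.ofReal (f (y + u)) * ENNReal.ofReal (L u) ∂μ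
          ≤ ∫⁻ u, B.indicator (fun u' => ENNReal.ofReal (L u')) u ∂μ := by
        have hmono := lintegral_mono (μ := μ) hNP
        rw [lintegral_add_left hmGL, lintegral_add_left hmIndL,
          lintegral_indicator hBmeas, setLIntegral_const,
          lintegral_const_mul _ (show Measurable fun u : Fin n → ℝ => ENNReal.ofReal (f (y + u))
            from ENNReal.measurable_ofReal.comp hfy), hlz y, hμB] at hmono
        exact (ENNReal.add_le_add_iff_right
          (ENNReal.mul_ne_top ENNReal.ofReal_ne_top ENNReal.ofReal_ne_top)).mp hmono
      have hmeasI : Measurable fun t : ℝ =>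
          (Ici t0).indicator (fun t' => ENNReal.ofReal (Real.exp (a * t' - a^2/2))) t := by
        refine Measurable.indicator ?_ measurableSet_Ici
        refine ENNReal.measurable_ofReal.comp (Real.measurable_exp.comp ?_)
        fun_prop
      have hRHS : ∫⁻ u, B.indicator (fun u' => ENNReal.ofReal (L u')) u ∂μ
          = ENNReal.ofReal (Phi (PhiInv (h y) + (1/σ) * d)) := by
        have hind : ∀ u, B.indicator (fun u' => ENNReal.ofReal (L u')) u
            = (Ici t0).indicator (fun t' => ENNReal.ofReal (Real.exp (a * t' - a^2/2))) (T u) := by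
          intro u
          by_cases hu : u ∈ B
          · rw [Set.indicator_of_mem hu, Set.indicator_of_mem (show T u ∈ Ici t0 from hu), hL]
          · rw [Set.indicator_of_notMem hu,
              Set.indicator_of_notMem (show T u ∉ Ici t0 from hu)]
        calc ∫⁻ u, B.indicator (fun u' => ENNReal.ofReal (L u')) u ∂μ
            = ∫⁻ u, (fun t => (Ici t0).indicator
                (fun t' => ENNReal.ofReal (Real.exp (a * t' - a^2/2))) t) (T u) ∂μ :=
              lintegral_congr hind
          _ = ∫⁻ t, (Ici t0).indicator
                (fun t' => ENNReal.ofReal (Real.exp (a * t' - a^2/2))) t ∂(μ.map T) :=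
              (lintegral_map hmeasI hTmeas).symm
          _ = ∫⁻ t, (Ici t0).indicator
                (fun t' => ENNReal.ofReal (Real.exp (a * t' - a^2/2))) t ∂(gaussianReal 0 1) := by
              rw [hlaw]
          _ = ∫⁻ t, (Ici t0).indicator (gaussianPDF a 1) t ∂volume := by
              rw [gaussianReal_of_var_ne_zero 0 one_ne_zero,
                lintegral_withDensity_eq_lintegral_mul volume (measurable_gaussianPDF 0 1) hmeasI]
              refine lintegral_congr fun t => ?_
              simp only [Pi.mul_apply]
              by_cases htm : t ∈ Ici t0
              · rw [Set.indicator_of_mem htm, Set.indicator_of_mem htm]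
                unfold gaussianPDF
                rw [← ENNReal.ofReal_mul (gaussianPDFReal_nonneg _ _ _)]
                congr 1
                have hps := gaussianPDFReal_shift (V := 1) one_ne_zero a t
                rw [gaussianPDFReal_sub] at hps
                simp only [zero_add, NNReal.coe_one, div_one] at hps
                rw [← hps]
              · rw [Set.indicator_of_notMem htm, Set.indicator_of_notMem htm, mul_zero]
          _ = (gaussianReal a 1) (Ici t0) := by
              rw [lintegral_indicator measurableSet_Ici, gaussianReal_apply a one_ne_zero]
          _ = ENNReal.ofReal (Phi (PhiInv (h y) + (1/σ) * d)) := by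
              have hmapa : (gaussianReal 0 1).map (· + a) = gaussianReal a 1 := by
                rw [gaussianReal_map_add_const a, zero_add]
              rw [← hmapa, Measure.map_apply (by fun_prop) measurableSet_Ici]
              have hpre2 : (· + a) ⁻¹' (Ici t0) = Ici (t0 - a) := by
                ext s
                simp only [mem_preimage, mem_Ici]
                constructor <;> intro <;> linarith
              rw [hpre2, gauss_Ici_eq_Iic_neg]
              have harg2 : -(t0 - a) = PhiInv (h y) + (1/σ) * d := by
                rw [ht0, ha]
                ring
              rw [harg2]
              unfold Phi
              rw [ENNReal.ofReal_toReal (measure_ne_top _ _)]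
      have hfinal : ENNReal.ofReal (h x) ≤ ENNReal.ofReal (Phi (PhiInv (h y) + (1/σ) * d)) := by
        rw [hshift, ← hRHS]
        exact hIleq
      exact (ENNReal.ofReal_le_ofReal_iff (Phi_nonneg _)).mp hfinal
  intro x y
  rw [abs_sub_le_iff]
  have hsymm : l2norm (y - x) = l2norm (x - y) := by
    unfold l2norm
    congr 1
    refine Finset.sum_congr rfl fun i _ => ?_
    simp only [Pi.sub_apply]
    ring
  constructor
  · have h1 := PhiInv_le (hh01 x) (key x y)
    linarith
  · have h2 := PhiInv_le (hh01 y) (key y x)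
    rw [hsymm] at h2
    linarith
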